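/- Let X = ℓ²((0,1]) be the real Hilbert space of square-summable families indexed by (0,1], with standard unit vectors e_s for s ∈ (0,1]. Define h : [0,1] → X by h(t) = e_t for t ∈ (0,1] and h(0) = 0. Then h is McShane integrable on [0,1] with integral 0. -/

import Mathlib

open scoped ENNReal

/-- `h : [0,1] → ℓ²((0,1])`, `h t = e_t` for `t ∈ (0,1]` and `h 0 = 0`, where `e_s` are the
standard unit vectors of `ℓ²((0,1])`. -/
noncomputable def hMcShane (t : ℝ) : lp (fun _ : Set.Ioc (0 : ℝ) 1 => ℝ) 2 :=
  if h : t ∈ Set.Ioc (0 : ℝ) 1 then lp.single 2 (⟨t, h⟩ : Set.Ioc (0 : ℝ) 1) 1 else 0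

/-- The unit interval `[0,1]` as a one-dimensional box. -/
noncomputable def unitBox : BoxIntegral.Box (Fin 1) :=
  ⟨fun _ => (0 : ℝ), fun _ => (1 : ℝ), fun _ => one_pos⟩

open BoxIntegral MeasureTheory Metric Set Finset in
open scoped RealInnerProductSpace in
lemma inner_hMcShane (s t : ℝ) :
    ⟪hMcShane s, hMcShane t⟫ = if s = t ∧ s ∈ Set.Ioc (0:ℝ) 1 then 1 else 0 := by
  classical
  unfold hMcShane
  by_cases hs : s ∈ Set.Ioc (0:ℝ) 1
  · by_cases ht : t ∈ Set.Ioc (0:ℝ) 1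
    · rw [dif_pos hs, dif_pos ht, lp.inner_single_left]
      by_cases hst : s = t
      · subst hst
        rw [lp.single_apply_self]
        simp [hs]
      · rw [lp.single_apply_ne 2 _ _ (by simp [hst])]
        simp [hst]
    · rw [dif_pos hs, dif_neg ht, inner_zero_right]
      rw [if_neg (by rintro ⟨rfl, h2⟩; exact ht h2)]
  · rw [dif_neg hs, inner_zero_left]
    simp [hs]

open BoxIntegral MeasureTheory Metric Set Finset in
open scoped RealInnerProductSpace in
/-- The function `h(t) = e_t` (with `h 0 = 0`) with values in `ℓ²((0,1])` is McShane
integrable on `[0,1]` with integral `0`. -/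
theorem hMcShane_mcShane_integrable :
    BoxIntegral.HasIntegral unitBox BoxIntegral.IntegrationParams.McShane
      (fun v => hMcShane (v 0)) MeasureTheory.volume.toBoxAdditive.toSMul
      (0 : lp (fun _ : Set.Ioc (0 : ℝ) 1 => ℝ) 2) := by
  classical
  refine BoxIntegral.hasIntegral_iff.2 fun ε hε => ?_
  set δ : ℝ := ε ^ 2 / 2 with hδdef
  have hδ0 : 0 < δ := by positivity
  refine ⟨fun _ _ => ⟨δ, hδ0⟩,
    fun c => by simp [IntegrationParams.RCond, IntegrationParams.McShane], fun c π hπ _ => ?_⟩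
  have hsub := hπ.isSubordinate
  set cc : Box (Fin 1) → ℝ := fun J => (volume (J : Set (Fin 1 → ℝ))).toReal with hcc
  have hc0 : ∀ J, 0 ≤ cc J := fun J => ENNReal.toReal_nonneg
  -- volume of a closed ball of radius δ in `Fin 1 → ℝ`
  have hball : (volume (closedBall (0 : Fin 1 → ℝ) δ)).toReal = 2 * δ := by
    rw [closedBall_pi _ hδ0.le, volume_pi_pi]
    simp [Real.volume_closedBall, ENNReal.toReal_ofReal, (by positivity : (0:ℝ) ≤ 2 * δ), hδ0.le]
  -- group bound: boxes sharing a tag have total measure at most `2δ`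
  have key : ∀ J ∈ π.boxes,
      ∑ K ∈ π.boxes.filter (fun K => π.tag K = π.tag J), cc K ≤ 2 * δ := by
    intro J hJ
    set F := π.boxes.filter (fun K => π.tag K = π.tag J) with hF
    have hdisj : (↑F : Set (Box (Fin 1))).Pairwise
        (Function.onFun Disjoint ((↑) : Box (Fin 1) → Set (Fin 1 → ℝ))) := by
      refine π.toPrepartition.pairwiseDisjoint.mono ?_
      intro K hK
      exact (Finset.mem_filter.1 hK).1
    have hmeas := measure_biUnion_finset (μ := volume) hdisj
      (fun K (_ : K ∈ F) => K.measurableSet_coe)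
    have hsubset : (⋃ K ∈ F, (K : Set (Fin 1 → ℝ))) ⊆ closedBall (π.tag J) δ := by
      refine Set.iUnion₂_subset fun K hK => ?_
      have htag : π.tag K = π.tag J := (Finset.mem_filter.1 hK).2
      have := hsub K (Finset.mem_filter.1 hK).1
      rw [htag] at this
      exact Set.Subset.trans Box.coe_subset_Icc this
    have hvol : volume (closedBall (π.tag J) δ) = volume (closedBall (0 : Fin 1 → ℝ) δ) := by
      simp [Measure.addHaar_closedBall_center]
    have h1 : ∑ K ∈ F, volume (K : Set (Fin 1 → ℝ)) ≤ volume (closedBall (0 : Fin 1 → ℝ) δ) := by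
      rw [← hmeas, ← hvol]
      exact measure_mono hsubset
    have h2 : (∑ K ∈ F, volume (K : Set (Fin 1 → ℝ))).toReal = ∑ K ∈ F, cc K := by
      rw [ENNReal.toReal_sum]
      exact fun K _ => (K.measure_coe_lt_top volume).ne
    calc ∑ K ∈ F, cc K = (∑ K ∈ F, volume (K : Set (Fin 1 → ℝ))).toReal := h2.symm
      _ ≤ (volume (closedBall (0 : Fin 1 → ℝ) δ)).toReal := by
          refine ENNReal.toReal_mono ?_ h1
          rw [closedBall_pi _ hδ0.le, volume_pi_pi]
          simp [Real.volume_closedBall, ENNReal.mul_eq_top]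
      _ = 2 * δ := hball
  -- total measure bound
  have total : ∑ J ∈ π.boxes, cc J ≤ 1 := by
    have h1 : ∑ J ∈ π.boxes, cc J = (volume π.iUnion).toReal := by
      rw [TaggedPrepartition.iUnion]
      exact (π.toPrepartition.measure_iUnion_toReal volume).symm
    have h2 : volume π.iUnion ≤ volume (unitBox : Set (Fin 1 → ℝ)) :=
      measure_mono π.iUnion_subset
    have h3 : (volume (unitBox : Set (Fin 1 → ℝ))).toReal = 1 := by
      rw [Box.volume_apply']
      simp [unitBox]
    rw [h1, ← h3]
    exact ENNReal.toReal_mono (Box.measure_coe_lt_top _ _).ne h2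
  -- the integral sum
  rw [dist_zero_right]
  set S : lp (fun _ : Set.Ioc (0 : ℝ) 1 => ℝ) 2 :=
    integralSum (fun v => hMcShane (v 0)) MeasureTheory.volume.toBoxAdditive.toSMul π with hS
  have hSsum : S = ∑ J ∈ π.boxes, cc J • hMcShane (π.tag J 0) := by
    simp [hS, integralSum, Measure.toBoxAdditive, hcc]
    refine Finset.sum_congr rfl fun J _ => ?_
    rw [measureReal_def, Box.volume_apply']
    simp
  have hinner : ⟪S, S⟫ ≤ ε ^ 2 := by
    rw [hSsum, sum_inner]
    have hterm : ∀ J ∈ π.boxes,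
        ⟪cc J • hMcShane (π.tag J 0), ∑ K ∈ π.boxes, cc K • hMcShane (π.tag K 0)⟫
          ≤ cc J * (2 * δ) := by
      intro J hJ
      rw [inner_sum]
      simp only [real_inner_smul_left, real_inner_smul_right, inner_hMcShane]
      have step : ∀ K ∈ π.boxes,
          cc K * (cc J * if π.tag J 0 = π.tag K 0 ∧ π.tag J 0 ∈ Set.Ioc (0:ℝ) 1 then 1 else 0)
            ≤ cc J * (if π.tag K = π.tag J then cc K else 0) := by
        intro K _
        split_ifs with h1 h2 h2
        · rw [mul_one]; exact (mul_comm (cc K) (cc J)).le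
        · exfalso
          exact h2 (funext fun i => by rw [Unique.eq_default i]; exact h1.1.symm)
        · have := mul_nonneg (hc0 J) (hc0 K)
          simpa using this
        · simp
      refine le_trans (Finset.sum_le_sum step) ?_
      calc ∑ K ∈ π.boxes, cc J * (if π.tag K = π.tag J then cc K else 0)
          = cc J * ∑ K ∈ π.boxes.filter (fun K => π.tag K = π.tag J), cc K := by
            rw [← Finset.mul_sum, Finset.sum_filter]
        _ ≤ cc J * (2 * δ) := by
            exact mul_le_mul_of_nonneg_left (key J hJ) (hc0 J)
    calc ∑ J ∈ π.boxes, ⟪cc J • hMcShane (π.tag J 0),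
            ∑ K ∈ π.boxes, cc K • hMcShane (π.tag K 0)⟫
        ≤ ∑ J ∈ π.boxes, cc J * (2 * δ) := Finset.sum_le_sum hterm
      _ = (∑ J ∈ π.boxes, cc J) * (2 * δ) := by rw [← Finset.sum_mul]
      _ ≤ 1 * (2 * δ) := by
          exact mul_le_mul_of_nonneg_right total (by positivity)
      _ = ε ^ 2 := by rw [one_mul, hδdef]; ring
  have hnorm2 : ‖S‖ ^ 2 ≤ ε ^ 2 := by
    rwa [← real_inner_self_eq_norm_sq]
  calc ‖S‖ = Real.sqrt (‖S‖ ^ 2) := (Real.sqrt_sq (norm_nonneg _)).symm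
    _ ≤ Real.sqrt (ε ^ 2) := Real.sqrt_le_sqrt hnorm2
    _ = ε := Real.sqrt_sq hε.le
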